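/- Let a, b > 0 and let k : ℝ → (0,1) solve k' = k(1−k)((1−a/b)k + a/b). Then k'(x)/k(x) → a/b as x → −∞ and k'(x)/(1 − k(x)) → 1 as x → +∞. -/

import Mathlib

open Filter

theorem stmt_6 (a b : ℝ) (ha : 0 < a) (hb : 0 < b) (k : ℝ → ℝ)
    (hk : ∀ x, k x ∈ Set.Ioo (0:ℝ) 1)
    (hode : ∀ x, HasDerivAt k (k x * (1 - k x) * ((1 - a / b) * k x + a / b)) x) :
    Tendsto (fun x => deriv k x / k x) atBot (nhds (a / b)) ∧
      Tendsto (fun x => deriv k x / (1 - k x)) atTop (nhds 1) := by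
  set c := a / b with hcdef
  have hc : 0 < c := div_pos ha hb
  have hderiv : ∀ x, deriv k x = k x * (1 - k x) * ((1 - c) * k x + c) :=
    fun x => (hode x).deriv
  have hdiff : Differentiable ℝ k := fun x => (hode x).differentiableAt
  have hpos : ∀ x, 0 < deriv k x := by
    intro x
    rw [hderiv x]
    obtain ⟨h0, h1⟩ := hk x
    nlinarith [mul_pos h0 (sub_pos.mpr h1), mul_nonneg hc.le (sub_pos.mpr h1).le]
  have hmono : StrictMono k := strictMono_of_deriv_pos hpos
  have hbddA : BddAbove (Set.range k) := ⟨1, by rintro _ ⟨x, rfl⟩; exact (hk x).2.le⟩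
  have hbddB : BddBelow (Set.range k) := ⟨0, by rintro _ ⟨x, rfl⟩; exact (hk x).1.le⟩
  have htop : Tendsto k atTop (nhds (⨆ x, k x)) := tendsto_atTop_ciSup hmono.monotone hbddA
  have hbot : Tendsto k atBot (nhds (⨅ x, k x)) := tendsto_atBot_ciInf hmono.monotone hbddB
  -- the supremum is 1
  have hL1 : (⨆ x, k x) = 1 := by
    by_contra hne
    set L := ⨆ x, k x with hLdef
    have hLle : L ≤ 1 := ciSup_le fun x => (hk x).2.le
    have hL : L < 1 := lt_of_le_of_ne hLle hne
    have hk0L : k 0 ≤ L := le_ciSup hbddA 0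
    have hk00 := (hk 0).1
    have hδ : 0 < k 0 * (1 - L) * k 0 := mul_pos (mul_pos hk00 (by linarith)) hk00
    have hX0 : 0 ≤ (1 - k 0) / (k 0 * (1 - L) * k 0) :=
      div_nonneg (by linarith [(hk 0).2]) hδ.le
    have key : ∀ t ∈ interior (Set.Icc (0:ℝ) ((1 - k 0) / (k 0 * (1 - L) * k 0))),
        k 0 * (1 - L) * k 0 ≤ deriv k t := by
      intro t ht
      rw [interior_Icc] at ht
      have h0t : (0:ℝ) ≤ t := ht.1.le
      have hkt0 : k 0 ≤ k t := hmono.monotone h0t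
      have hktL : k t ≤ L := le_ciSup hbddA t
      obtain ⟨ht0, ht1⟩ := hk t
      rw [hderiv t]
      have hE : k t ≤ (1 - c) * k t + c := by nlinarith [mul_nonneg hc.le (sub_pos.mpr ht1).le]
      have h1 : k 0 * (1 - L) ≤ k t * (1 - k t) :=
        mul_le_mul hkt0 (by linarith) (by linarith) ht0.le
      exact mul_le_mul h1 (hkt0.trans hE) hk00.le
        (mul_nonneg ht0.le (by linarith))
    have hslope := (convex_Icc (0:ℝ) _).mul_sub_le_image_sub_of_le_deriv
      hdiff.continuous.continuousOn (hdiff.differentiableOn) key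
      0 (Set.left_mem_Icc.mpr hX0) _ (Set.right_mem_Icc.mpr hX0) hX0
    have hδX : k 0 * (1 - L) * k 0 * ((1 - k 0) / (k 0 * (1 - L) * k 0) - 0) = 1 - k 0 := by
      field_simp
      ring
    rw [hδX] at hslope
    have h1 : (1:ℝ) ≤ k ((1 - k 0) / (k 0 * (1 - L) * k 0)) := by linarith
    exact absurd (hk _).2 (not_lt.mpr h1)
  have hl0 : (⨅ x, k x) = 0 := by
    by_contra hne
    set l := ⨅ x, k x with hldef
    have hlge : 0 ≤ l := le_ciInf fun x => (hk x).1.le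
    have hl : 0 < l := lt_of_le_of_ne hlge (Ne.symm hne)
    have hlk0 : l ≤ k 0 := ciInf_le hbddB 0
    have hk01 := (hk 0).2
    have hδ : 0 < l * (1 - k 0) * l := mul_pos (mul_pos hl (by linarith)) hl
    have hX0 : -(k 0) / (l * (1 - k 0) * l) - 1 ≤ 0 := by
      have h := div_nonneg (hk 0).1.le hδ.le
      rw [neg_div]
      linarith
    have key : ∀ t ∈ interior (Set.Icc (-(k 0) / (l * (1 - k 0) * l) - 1) (0:ℝ)),
        l * (1 - k 0) * l ≤ deriv k t := by
      intro t ht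
      rw [interior_Icc] at ht
      have hkt0 : k t ≤ k 0 := hmono.monotone ht.2.le
      have hktl : l ≤ k t := ciInf_le hbddB t
      obtain ⟨ht0, ht1⟩ := hk t
      rw [hderiv t]
      have hE : k t ≤ (1 - c) * k t + c := by nlinarith [mul_nonneg hc.le (sub_pos.mpr ht1).le]
      have h1 : l * (1 - k 0) ≤ k t * (1 - k t) :=
        mul_le_mul hktl (by linarith) (by linarith) ht0.le
      exact mul_le_mul h1 (hktl.trans hE) hl.le
        (mul_nonneg ht0.le (by linarith))
    have hslope := (convex_Icc _ (0:ℝ)).mul_sub_le_image_sub_of_le_deriv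
      hdiff.continuous.continuousOn (hdiff.differentiableOn) key
      _ (Set.left_mem_Icc.mpr hX0) 0 (Set.right_mem_Icc.mpr hX0) hX0
    have hδX : l * (1 - k 0) * l * (0 - (-(k 0) / (l * (1 - k 0) * l) - 1))
        = k 0 + l * (1 - k 0) * l := by
      field_simp
      ring
    rw [hδX] at hslope
    have h1 : k (-(k 0) / (l * (1 - k 0) * l) - 1) ≤ -(l * (1 - k 0) * l) := by linarith
    exact absurd (hk _).1 (not_lt.mpr (by linarith))
  rw [hL1] at htop
  rw [hl0] at hbot
  constructor
  · have heq : (fun x => deriv k x / k x) = fun x => (1 - k x) * ((1 - c) * k x + c) := by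
      funext x
      rw [hderiv x]
      have hne := (hk x).1.ne'
      field_simp
    rw [heq]
    have h1 : Tendsto (fun x => 1 - k x) atBot (nhds (1 - 0)) :=
      (tendsto_const_nhds : Tendsto (fun _ : ℝ => (1:ℝ)) atBot _).sub hbot
    have h2 : Tendsto (fun x => (1 - c) * k x + c) atBot (nhds ((1 - c) * 0 + c)) :=
      ((tendsto_const_nhds : Tendsto (fun _ : ℝ => (1 - c)) atBot _).mul hbot).add
        (tendsto_const_nhds : Tendsto (fun _ : ℝ => c) atBot _)
    have h3 := h1.mul h2
    norm_num at h3
    exact h3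
  · have heq : (fun x => deriv k x / (1 - k x)) = fun x => k x * ((1 - c) * k x + c) := by
      funext x
      rw [hderiv x]
      have hne : 1 - k x ≠ 0 := (sub_pos.mpr (hk x).2).ne'
      field_simp
    rw [heq]
    have h2 : Tendsto (fun x => (1 - c) * k x + c) atTop (nhds ((1 - c) * 1 + c)) :=
      ((tendsto_const_nhds : Tendsto (fun _ : ℝ => (1 - c)) atTop _).mul htop).add
        (tendsto_const_nhds : Tendsto (fun _ : ℝ => c) atTop _)
    have h3 := htop.mul h2
    have h4 : (1:ℝ) * ((1 - c) * 1 + c) = 1 := by ring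
    rw [h4] at h3
    exact h3
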